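/- For 0 < m < n, the product Δᵐ × Δ^{n−m} of standard simplices is combinatorially equivalent to a face truncation Π_G(Δⁿ) of the standard n-simplex at a suitable face G; moreover given any vertex v of Δᵐ × Δ^{n−m}, the equivalence can be chosen to map v to a vertex v′ of Δⁿ not contained in G. -/

import Mathlib

open Set

/-- The standard `n`-simplex in `ℝⁿ`. -/
def stdSimplexSet (n : ℕ) : Set (Fin n → ℝ) :=
  {x | (∀ r, 0 ≤ x r) ∧ ∑ r, x r ≤ 1}

/-- The poset of (exposed) faces of a subset of a real topological vector space,
ordered by inclusion.  For polytopes this is the face lattice, so an order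
isomorphism of face posets is a combinatorial equivalence. -/
def facePoset {E : Type*} [AddCommMonoid E] [Module ℝ E] [TopologicalSpace E]
    (P : Set E) : Type _ :=
  {F : Set E // IsExposed ℝ P F}

instance {E : Type*} [AddCommMonoid E] [Module ℝ E] [TopologicalSpace E]
    (P : Set E) : PartialOrder (facePoset P) :=
  Subtype.partialOrder _

namespace SPTS

variable {p m n : ℕ}

/-! ### Convexity and extreme points of the standard simplex -/

lemma convex_std (p : ℕ) : Convex ℝ (stdSimplexSet p) := by
  intro x hx y hy s t hs ht hst
  constructor
  · intro r
    have h1 := hx.1 r; have h2 := hy.1 r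
    simp only [Pi.add_apply, Pi.smul_apply, smul_eq_mul]
    positivity
  · have : ∑ r, (s • x + t • y) r = s * ∑ r, x r + t * ∑ r, y r := by
      simp [Finset.mul_sum, Finset.sum_add_distrib]
    rw [this]
    nlinarith [hx.2, hy.2]

lemma std_eq_hull (p : ℕ) :
    stdSimplexSet p = convexHull ℝ (insert 0 (range fun i : Fin p => Pi.single i 1)) := by
  apply Subset.antisymm
  · intro x hx
    have hmem : (Finset.univ : Finset (Option (Fin p))).centerMass
        (fun o => o.elim (1 - ∑ r, x r) (fun i => x i))
        (fun o => o.elim (0 : Fin p → ℝ) (fun i => Pi.single i 1)) ∈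
        convexHull ℝ (insert 0 (range fun i : Fin p => Pi.single i 1)) := by
      apply Finset.centerMass_mem_convexHull
      · rintro (_|i) _
        · simpa using hx.2
        · exact hx.1 i
      · have : ∑ o : Option (Fin p), o.elim (1 - ∑ r, x r) (fun i => x i) = 1 := by
          rw [Fintype.sum_option]; simp
        rw [this]; norm_num
      · rintro (_|i) _
        · exact mem_insert _ _
        · exact subset_insert _ _ ⟨i, rfl⟩
    have heq : (Finset.univ : Finset (Option (Fin p))).centerMass
        (fun o => o.elim (1 - ∑ r, x r) (fun i => x i))
        (fun o => o.elim (0 : Fin p → ℝ) (fun i => Pi.single i 1)) = x := by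
      rw [Finset.centerMass]
      have hsum : ∑ o : Option (Fin p), o.elim (1 - ∑ r, x r) (fun i => x i) = 1 := by
        rw [Fintype.sum_option]; simp
      rw [hsum]
      funext r
      simp only [inv_one, one_smul]
      rw [Fintype.sum_option]
      simp [Pi.single_apply, Finset.sum_ite_eq, Finset.mul_sum]
    rwa [heq] at hmem
  · apply convexHull_min _ (convex_std p)
    rintro y (rfl | ⟨i, rfl⟩)
    · exact ⟨fun r => le_refl 0, by simp⟩
    · refine ⟨fun r => ?_, ?_⟩
      · simp only [Pi.single_apply]; split <;> norm_num
      · simp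

lemma extreme_subset (p : ℕ) :
    Set.extremePoints ℝ (stdSimplexSet p) ⊆ insert 0 (range fun i : Fin p => Pi.single i 1) := by
  rw [std_eq_hull]
  exact extremePoints_convexHull_subset

lemma zero_extreme (p : ℕ) : (0 : Fin p → ℝ) ∈ Set.extremePoints ℝ (stdSimplexSet p) := by
  refine ⟨⟨fun r => le_refl 0, by simp⟩, ?_⟩
  intro x₁ h₁ x₂ h₂ hseg
  obtain ⟨s, t, hs, ht, hst, heq⟩ := hseg
  have key : ∀ r, x₁ r = 0 ∧ x₂ r = 0 := by
    intro r
    have := congrFun heq r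
    simp only [Pi.add_apply, Pi.smul_apply, smul_eq_mul, Pi.zero_apply] at this
    have a1 := h₁.1 r; have a2 := h₂.1 r
    constructor <;> nlinarith
  funext r
  exact (key r).1

/-! ### Reflections of the simplex -/

def tref (a x : Fin p → ℝ) : Fin p → ℝ :=
  fun r => x r + (1 - ∑ j, x j - ∑ j, a j * x j) * a r

def IsVert (a : Fin p → ℝ) : Prop := a = 0 ∨ ∃ i, a = Pi.single i 1

lemma sum_single_mul (i : Fin p) (x : Fin p → ℝ) :
    ∑ j, (Pi.single i 1 : Fin p → ℝ) j * x j = x i := by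
  simp [Pi.single_apply, ite_mul]

lemma sum_single (i : Fin p) : ∑ j, (Pi.single i 1 : Fin p → ℝ) j = 1 := by
  simp [Pi.single_apply]

lemma tref_zero (x : Fin p → ℝ) : tref 0 x = x := by
  funext r; simp [tref]

lemma tref_apply_single (i : Fin p) (x : Fin p → ℝ) (r : Fin p) :
    tref (Pi.single i 1) x r = if r = i then 1 - ∑ j, x j else x r := by
  simp only [tref, sum_single_mul, Pi.single_apply]
  split <;> ring_nf <;> simp_all <;> ring

lemma sum_tref (a x : Fin p → ℝ) :
    ∑ r, tref a x r = ∑ r, x r + (1 - ∑ j, x j - ∑ j, a j * x j) * ∑ r, a r := by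
  simp [tref, Finset.sum_add_distrib, Finset.mul_sum]

lemma sum_tref_single (i : Fin p) (x : Fin p → ℝ) :
    ∑ r, tref (Pi.single i 1) x r = 1 - x i := by
  rw [sum_tref, sum_single_mul, sum_single]; ring

lemma tref_invol {a : Fin p → ℝ} (ha : IsVert a) (x : Fin p → ℝ) : tref a (tref a x) = x := by
  obtain rfl | ⟨i, rfl⟩ := ha
  · rw [tref_zero, tref_zero]
  · funext r
    rw [tref_apply_single]
    by_cases h : r = i
    · rw [if_pos h, sum_tref_single, h]; ring
    · rw [if_neg h, tref_apply_single, if_neg h]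

lemma tref_self {a : Fin p → ℝ} (ha : IsVert a) : tref a a = 0 := by
  obtain rfl | ⟨i, rfl⟩ := ha
  · rw [tref_zero]
  · funext r
    rw [tref_apply_single, sum_single]
    by_cases h : r = i
    · rw [if_pos h]; simp
    · rw [if_neg h]; simp [Pi.single_apply, h]

lemma tref_mem {a : Fin p → ℝ} (ha : IsVert a) {x : Fin p → ℝ} (hx : x ∈ stdSimplexSet p) :
    tref a x ∈ stdSimplexSet p := by
  obtain rfl | ⟨i, rfl⟩ := ha
  · rwa [tref_zero]
  · constructor
    · intro r
      rw [tref_apply_single]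
      split
      · linarith [hx.2]
      · exact hx.1 r
    · rw [sum_tref_single]
      linarith [hx.1 i]

/-! ### Index bookkeeping -/

def inj1 (h : m ≤ n) (i : Fin m) : Fin n := ⟨i.1, lt_of_lt_of_le i.2 h⟩

def inj2 (j : Fin (n - m)) : Fin n := ⟨m + j.1, by have := j.2; omega⟩

def splitEquiv (h : m ≤ n) : Fin m ⊕ Fin (n - m) ≃ Fin n where
  toFun := Sum.elim (inj1 h) inj2
  invFun r := if hr : (r : ℕ) < m then Sum.inl ⟨r, hr⟩
    else Sum.inr ⟨(r : ℕ) - m, by have := r.2; omega⟩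
  left_inv s := by
    rcases s with i | j
    · simp [inj1]
    · have := j.2
      simp only [Sum.elim_inr, inj2]
      simp only [show ¬ (m + (j:ℕ) < m) by omega, ↓reduceDIte]
      congr 1
      exact Fin.ext (by simp)
  right_inv r := by
    by_cases hr : (r : ℕ) < m
    · simp [hr, inj1]
    · simp only [dif_neg hr]
      have := r.2
      exact Fin.ext (by simp [inj2]; omega)

lemma sum_split (h : m ≤ n) (g : Fin n → ℝ) :
    ∑ r, g r = ∑ i : Fin m, g (inj1 h i) + ∑ j : Fin (n - m), g (inj2 j) := by
  rw [← Equiv.sum_comp (splitEquiv h) g, Fintype.sum_sum_type]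
  rfl

def ssum : (Fin p → ℝ) →ₗ[ℝ] ℝ where
  toFun x := ∑ j, x j
  map_add' x y := by simp [Finset.sum_add_distrib]
  map_smul' c x := by simp [Finset.mul_sum]

def sdot (a : Fin p → ℝ) : (Fin p → ℝ) →ₗ[ℝ] ℝ where
  toFun x := ∑ j, a j * x j
  map_add' x y := by simp [mul_add, Finset.sum_add_distrib]
  map_smul' c x := by
    simp only [Pi.smul_apply, smul_eq_mul, RingHom.id_apply, Finset.mul_sum]
    exact Finset.sum_congr rfl fun j _ => by ring

def res1 (h : m ≤ n) : (Fin n → ℝ) →ₗ[ℝ] (Fin m → ℝ) := LinearMap.funLeft ℝ ℝ (inj1 h)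

def res2 : (Fin n → ℝ) →ₗ[ℝ] (Fin (n - m) → ℝ) := LinearMap.funLeft ℝ ℝ inj2

def fcut (h : m ≤ n) : (Fin n → ℝ) →ₗ[ℝ] ℝ := ssum.comp (res1 h)

lemma fcut_apply (h : m ≤ n) (z : Fin n → ℝ) : fcut h z = ∑ i : Fin m, z (inj1 h i) := rfl

def join (u : Fin m → ℝ) (w : Fin (n - m) → ℝ) : Fin n → ℝ :=
  fun r => if hr : (r : ℕ) < m then u ⟨r, hr⟩ else w ⟨(r : ℕ) - m, by have := r.2; omega⟩

lemma join_inj1 (h : m ≤ n) (u : Fin m → ℝ) (w : Fin (n - m) → ℝ) (i : Fin m) :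
    join u w (inj1 h i) = u i := by
  simp [join, inj1]

lemma join_inj2 (u : Fin m → ℝ) (w : Fin (n - m) → ℝ) (j : Fin (n - m)) :
    join u w (inj2 j) = w j := by
  have := j.2
  simp only [join, inj2]
  simp only [show ¬ (m + (j:ℕ) < m) by omega, ↓reduceDIte]
  congr 1
  exact Fin.ext (by simp)

lemma fcut_join (h : m ≤ n) (u : Fin m → ℝ) (w : Fin (n - m) → ℝ) :
    fcut h (join u w) = ∑ i, u i := by
  rw [fcut_apply]
  exact Finset.sum_congr rfl fun i _ => join_inj1 h u w i

lemma sum_join (h : m ≤ n) (u : Fin m → ℝ) (w : Fin (n - m) → ℝ) :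
    ∑ r, join u w r = ∑ i, u i + ∑ j, w j := by
  rw [sum_split h]
  simp [join_inj1 h, join_inj2]

lemma join_nonneg {u : Fin m → ℝ} {w : Fin (n - m) → ℝ}
    (hu : ∀ i, 0 ≤ u i) (hw : ∀ j, 0 ≤ w j) (r : Fin n) : 0 ≤ join u w r := by
  unfold join
  split
  · exact hu _
  · exact hw _

/-! ### The projective maps -/

noncomputable def fwd (a : Fin m → ℝ) (b : Fin (n - m) → ℝ)
    (x : (Fin m → ℝ) × (Fin (n - m) → ℝ)) : Fin n → ℝ :=
  (1 + ∑ i, tref a x.1 i)⁻¹ • join (tref a x.1) (tref b x.2)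

noncomputable def bwd (h : m ≤ n) (a : Fin m → ℝ) (b : Fin (n - m) → ℝ) (z : Fin n → ℝ) :
    (Fin m → ℝ) × (Fin (n - m) → ℝ) :=
  (tref a fun i => z (inj1 h i) / (1 - fcut h z),
   tref b fun j => z (inj2 j) / (1 - fcut h z))

noncomputable def gmap (h : m ≤ n) (a : Fin m → ℝ) (b : Fin (n - m) → ℝ) :
    (Fin n → ℝ) →ₗ[ℝ] (Fin m → ℝ) × (Fin (n - m) → ℝ) :=
  (LinearMap.pi fun r : Fin m =>
      LinearMap.proj (inj1 h r) - a r • ((2 : ℝ) • fcut h + (sdot a).comp (res1 h))).prod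
  (LinearMap.pi fun r : Fin (n - m) =>
      LinearMap.proj (inj2 r) - b r • (fcut h + (ssum (p := n - m)).comp (res2 (m := m)) +
        (sdot b).comp (res2 (m := m))))

lemma gmap_apply (h : m ≤ n) (a : Fin m → ℝ) (b : Fin (n - m) → ℝ) (z : Fin n → ℝ) :
    gmap h a b z =
      (fun r => z (inj1 h r) - a r * (2 * fcut h z + ∑ j, a j * z (inj1 h j)),
       fun r => z (inj2 r) - b r * (fcut h z + ∑ j : Fin (n - m), z (inj2 j) +
         ∑ j : Fin (n - m), b j * z (inj2 j))) := rfl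

noncomputable def hmap (h : m ≤ n) (a : Fin m → ℝ) (b : Fin (n - m) → ℝ) :
    ((Fin m → ℝ) × (Fin (n - m) → ℝ)) →ₗ[ℝ] (Fin n → ℝ) :=
  LinearMap.pi fun r : Fin n =>
    if hr : (r : ℕ) < m then
      ((LinearMap.proj (⟨r, hr⟩ : Fin m) - a ⟨r, hr⟩ • (ssum + sdot a)).comp
        (LinearMap.fst ℝ _ _))
    else
      ((LinearMap.proj (⟨(r : ℕ) - m, by have := r.2; omega⟩ : Fin (n - m)) -
          b ⟨(r : ℕ) - m, by have := r.2; omega⟩ • (ssum + sdot b)).comp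
        (LinearMap.snd ℝ _ _))

lemma hmap_apply (h : m ≤ n) (a : Fin m → ℝ) (b : Fin (n - m) → ℝ)
    (x : (Fin m → ℝ) × (Fin (n - m) → ℝ)) :
    hmap h a b x =
      join (fun r => x.1 r - a r * (∑ j, x.1 j + ∑ j, a j * x.1 j))
           (fun r => x.2 r - b r * (∑ j, x.2 j + ∑ j, b j * x.2 j)) := by
  funext r
  by_cases hr : (r : ℕ) < m <;> simp [hmap, join, hr, ssum, sdot, mul_add]

lemma bwd_smul (h : m ≤ n) (a : Fin m → ℝ) (b : Fin (n - m) → ℝ) (z : Fin n → ℝ)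
    (hs : (1 : ℝ) - fcut h z ≠ 0) :
    (1 - fcut h z) • bwd h a b z = gmap h a b z + (a, b) := by
  have e1 : ∑ j : Fin m, z (inj1 h j) / (1 - fcut h z) = fcut h z / (1 - fcut h z) := by
    rw [← Finset.sum_div]; rfl
  have e2 : ∑ j : Fin m, a j * (z (inj1 h j) / (1 - fcut h z)) =
      (∑ j : Fin m, a j * z (inj1 h j)) / (1 - fcut h z) := by
    rw [Finset.sum_div]; exact Finset.sum_congr rfl fun j _ => by ring
  have e3 : ∑ j : Fin (n - m), z (inj2 j) / (1 - fcut h z) =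
      (∑ j : Fin (n - m), z (inj2 j)) / (1 - fcut h z) := by
    rw [← Finset.sum_div]
  have e4 : ∑ j : Fin (n - m), b j * (z (inj2 j) / (1 - fcut h z)) =
      (∑ j : Fin (n - m), b j * z (inj2 j)) / (1 - fcut h z) := by
    rw [Finset.sum_div]; exact Finset.sum_congr rfl fun j _ => by ring
  refine Prod.ext ?_ ?_ <;> funext r <;>
    simp only [gmap_apply, bwd, Prod.smul_fst, Prod.smul_snd, Pi.smul_apply, smul_eq_mul,
      Prod.fst_add, Prod.snd_add, Pi.add_apply, tref, e1, e2, e3, e4]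
  · field_simp; ring
  · field_simp; ring

lemma join_tref_eq (h : m ≤ n) (a : Fin m → ℝ) (b : Fin (n - m) → ℝ)
    (x : (Fin m → ℝ) × (Fin (n - m) → ℝ)) :
    join (tref a x.1) (tref b x.2) = hmap h a b x + join a b := by
  rw [hmap_apply]
  funext r
  by_cases hr : (r : ℕ) < m <;> simp [join, hr, tref] <;> ring


/-! ### Polytope facts -/

lemma fcut_fwd (h : m ≤ n) (a : Fin m → ℝ) (b : Fin (n - m) → ℝ)
    (x : (Fin m → ℝ) × (Fin (n - m) → ℝ)) :
    fcut h (fwd a b x) = (1 + ∑ i, tref a x.1 i)⁻¹ * ∑ i, tref a x.1 i := by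
  simp only [fwd, map_smul, smul_eq_mul, fcut_join h]

lemma fwd_mem {a : Fin m → ℝ} {b : Fin (n - m) → ℝ} (ha : IsVert a) (hb : IsVert b)
    {x : (Fin m → ℝ) × (Fin (n - m) → ℝ)}
    (hx : x ∈ stdSimplexSet m ×ˢ stdSimplexSet (n - m)) (h : m ≤ n) :
    fwd a b x ∈ stdSimplexSet n ∩ {z | fcut h z ≤ 1/2} := by
  have hu := tref_mem ha hx.1
  have hw := tref_mem hb hx.2
  have hsu0 : 0 ≤ ∑ i, tref a x.1 i := Finset.sum_nonneg fun i _ => hu.1 i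
  have hsu1 : ∑ i, tref a x.1 i ≤ 1 := hu.2
  have hsw0 : 0 ≤ ∑ j, tref b x.2 j := Finset.sum_nonneg fun j _ => hw.1 j
  have hsw1 : ∑ j, tref b x.2 j ≤ 1 := hw.2
  have hd : (0:ℝ) < 1 + ∑ i, tref a x.1 i := by linarith
  refine ⟨⟨fun r => ?_, ?_⟩, ?_⟩
  · have hj : 0 ≤ join (tref a x.1) (tref b x.2) r :=
      join_nonneg (fun i => hu.1 i) (fun j => hw.1 j) r
    have : fwd a b x r = (1 + ∑ i, tref a x.1 i)⁻¹ * join (tref a x.1) (tref b x.2) r := rfl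
    rw [this]; positivity
  · have hsum : ∑ r, fwd a b x r =
        (1 + ∑ i, tref a x.1 i)⁻¹ * (∑ i, tref a x.1 i + ∑ j, tref b x.2 j) := by
      simp only [fwd, Pi.smul_apply, smul_eq_mul, ← Finset.mul_sum, sum_join h]
    rw [hsum]
    calc (1 + ∑ i, tref a x.1 i)⁻¹ * (∑ i, tref a x.1 i + ∑ j, tref b x.2 j)
        ≤ (1 + ∑ i, tref a x.1 i)⁻¹ * (1 + ∑ i, tref a x.1 i) := by
          apply mul_le_mul_of_nonneg_left (by linarith) (by positivity)
      _ = 1 := by field_simp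
  · show fcut h (fwd a b x) ≤ 1/2
    rw [fcut_fwd]
    have hkey : (1 + ∑ i, tref a x.1 i)⁻¹ * ∑ i, tref a x.1 i
        = (∑ i, tref a x.1 i) / (1 + ∑ i, tref a x.1 i) := by ring
    rw [hkey, div_le_iff₀ hd]
    linarith

lemma bwd_fwd {a : Fin m → ℝ} {b : Fin (n - m) → ℝ} (ha : IsVert a) (hb : IsVert b)
    {x : (Fin m → ℝ) × (Fin (n - m) → ℝ)}
    (hx : x ∈ stdSimplexSet m ×ˢ stdSimplexSet (n - m)) (h : m ≤ n) :
    bwd h a b (fwd a b x) = x := by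
  have hu := tref_mem ha hx.1
  have hsu0 : 0 ≤ ∑ i, tref a x.1 i := Finset.sum_nonneg fun i _ => hu.1 i
  have hd : (0:ℝ) < 1 + ∑ i, tref a x.1 i := by linarith
  have hden : 1 - fcut h (fwd a b x) = (1 + ∑ i, tref a x.1 i)⁻¹ := by
    rw [fcut_fwd]; field_simp; ring
  have harg1 : (fun i => fwd a b x (inj1 h i) / (1 - fcut h (fwd a b x))) = tref a x.1 := by
    funext i
    have h1 : fwd a b x (inj1 h i) = (1 + ∑ i, tref a x.1 i)⁻¹ * tref a x.1 i := by
      simp only [fwd, Pi.smul_apply, smul_eq_mul, join_inj1 h]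
    rw [h1, hden, mul_comm, mul_div_assoc, div_self (by positivity), mul_one]
  have harg2 : (fun j => fwd a b x (inj2 j) / (1 - fcut h (fwd a b x))) = tref b x.2 := by
    funext j
    have h1 : fwd a b x (inj2 j) = (1 + ∑ i, tref a x.1 i)⁻¹ * tref b x.2 j := by
      simp only [fwd, Pi.smul_apply, smul_eq_mul, join_inj2]
    rw [h1, hden, mul_comm, mul_div_assoc, div_self (by positivity), mul_one]
  show (tref a fun i => fwd a b x (inj1 h i) / (1 - fcut h (fwd a b x)),
        tref b fun j => fwd a b x (inj2 j) / (1 - fcut h (fwd a b x))) = x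
  rw [harg1, harg2, tref_invol ha, tref_invol hb]

lemma bwd_mem {a : Fin m → ℝ} {b : Fin (n - m) → ℝ} (ha : IsVert a) (hb : IsVert b)
    {z : Fin n → ℝ} (h : m ≤ n) (hz : z ∈ stdSimplexSet n ∩ {z | fcut h z ≤ 1/2}) :
    bwd h a b z ∈ stdSimplexSet m ×ˢ stdSimplexSet (n - m) := by
  obtain ⟨⟨hz0, hz1⟩, hzc⟩ := hz
  have hc0 : 0 ≤ fcut h z := by
    rw [fcut_apply]; exact Finset.sum_nonneg fun i _ => hz0 _
  have hs : (0:ℝ) < 1 - fcut h z := by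
    have : fcut h z ≤ 1/2 := hzc
    linarith
  have hsplit := sum_split h z
  constructor
  · apply tref_mem ha
    constructor
    · intro i
      exact div_nonneg (hz0 _) hs.le
    · have : ∑ i : Fin m, z (inj1 h i) / (1 - fcut h z) = fcut h z / (1 - fcut h z) := by
        rw [← Finset.sum_div]; rfl
      rw [this, div_le_one hs]
      have : fcut h z ≤ 1/2 := hzc
      linarith
  · apply tref_mem hb
    constructor
    · intro j
      exact div_nonneg (hz0 _) hs.le
    · have he : ∑ j : Fin (n - m), z (inj2 j) / (1 - fcut h z) =
          (∑ j : Fin (n - m), z (inj2 j)) / (1 - fcut h z) := by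
        rw [← Finset.sum_div]
      rw [he, div_le_one hs, fcut_apply] at *
      linarith

lemma fwd_bwd {a : Fin m → ℝ} {b : Fin (n - m) → ℝ} (ha : IsVert a) (hb : IsVert b)
    {z : Fin n → ℝ} (h : m ≤ n) (hz : z ∈ stdSimplexSet n ∩ {z | fcut h z ≤ 1/2}) :
    fwd a b (bwd h a b z) = z := by
  obtain ⟨⟨hz0, hz1⟩, hzc⟩ := hz
  have hc0 : 0 ≤ fcut h z := by
    rw [fcut_apply]; exact Finset.sum_nonneg fun i _ => hz0 _
  have hs : (0:ℝ) < 1 - fcut h z := by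
    have : fcut h z ≤ 1/2 := hzc
    linarith
  have h1 : tref a (bwd h a b z).1 = fun i => z (inj1 h i) / (1 - fcut h z) := by
    show tref a (tref a _) = _
    rw [tref_invol ha]
  have h2 : tref b (bwd h a b z).2 = fun j => z (inj2 j) / (1 - fcut h z) := by
    show tref b (tref b _) = _
    rw [tref_invol hb]
  show (1 + ∑ i, tref a (bwd h a b z).1 i)⁻¹ •
      join (tref a (bwd h a b z).1) (tref b (bwd h a b z).2) = z
  rw [h1, h2]
  have hd : 1 + ∑ i : Fin m, z (inj1 h i) / (1 - fcut h z) = (1 - fcut h z)⁻¹ := by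
    have : ∑ i : Fin m, z (inj1 h i) / (1 - fcut h z) = fcut h z / (1 - fcut h z) := by
      rw [← Finset.sum_div]; rfl
    rw [this]
    field_simp; ring
  rw [hd, inv_inv]
  have hj : join (fun i => z (inj1 h i) / (1 - fcut h z))
      (fun j => z (inj2 j) / (1 - fcut h z)) = (1 - fcut h z)⁻¹ • z := by
    funext r
    unfold join
    split
    · next hr =>
      have he : inj1 h ⟨(r:ℕ), hr⟩ = r := Fin.ext rfl
      simp only [he, Pi.smul_apply, smul_eq_mul]
      ring
    · next hr =>
      have hr2 := r.2
      have he : inj2 (m := m) ⟨(r:ℕ) - m, by omega⟩ = r := Fin.ext (by simp [inj2]; omega)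
      simp only [he, Pi.smul_apply, smul_eq_mul]
      ring
  rw [hj, smul_smul, mul_inv_cancel₀ hs.ne', one_smul]

/-! ### Transfer of exposedness data -/

lemma transferA (h : m ≤ n) (a : Fin m → ℝ) (b : Fin (n - m) → ℝ)
    (l : ((Fin m → ℝ) × (Fin (n - m) → ℝ)) →L[ℝ] ℝ) (M : ℝ) :
    ∃ (k : (Fin n → ℝ) →L[ℝ] ℝ) (d : ℝ), ∀ z ∈ stdSimplexSet n ∩ {z | fcut h z ≤ 1/2},
      ∃ t : ℝ, 0 < t ∧ k z + d - M = t * (l (bwd h a b z) - M) := by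
  refine ⟨LinearMap.toContinuousLinearMap
      (((l : ((Fin m → ℝ) × (Fin (n - m) → ℝ)) →ₗ[ℝ] ℝ).comp (gmap h a b)) + M • fcut h),
      l (a, b), fun z hz => ?_⟩
  have hc0 : 0 ≤ fcut h z := by
    rw [fcut_apply]; exact Finset.sum_nonneg fun i _ => hz.1.1 _
  have hs : (0:ℝ) < 1 - fcut h z := by
    have : fcut h z ≤ 1/2 := hz.2
    linarith
  refine ⟨1 - fcut h z, hs, ?_⟩
  have hb1 := congrArg l (bwd_smul h a b z hs.ne')
  rw [map_smul, map_add] at hb1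
  simp only [smul_eq_mul] at hb1
  have hk : LinearMap.toContinuousLinearMap
      (((l : ((Fin m → ℝ) × (Fin (n - m) → ℝ)) →ₗ[ℝ] ℝ).comp (gmap h a b)) + M • fcut h) z
      = l (gmap h a b z) + M * fcut h z := by
    simp [LinearMap.coe_toContinuousLinearMap', LinearMap.add_apply, LinearMap.smul_apply,
      LinearMap.comp_apply, smul_eq_mul]
  rw [hk]
  linear_combination -hb1

lemma transferB (h : m ≤ n) {a : Fin m → ℝ} {b : Fin (n - m) → ℝ} (ha : IsVert a)
    (l : (Fin n → ℝ) →L[ℝ] ℝ) (M : ℝ) :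
    ∃ (k : ((Fin m → ℝ) × (Fin (n - m) → ℝ)) →L[ℝ] ℝ) (d : ℝ),
      ∀ x ∈ stdSimplexSet m ×ˢ stdSimplexSet (n - m),
      ∃ t : ℝ, 0 < t ∧ k x + d - M = t * (l (fwd a b x) - M) := by
  refine ⟨LinearMap.toContinuousLinearMap
      (((l : (Fin n → ℝ) →ₗ[ℝ] ℝ).comp (hmap h a b)) - M • ((fcut h).comp (hmap h a b))),
      l (join a b) + M - M * (1 + ∑ j, a j), fun x hx => ?_⟩
  have hu := tref_mem ha hx.1
  have hsu0 : 0 ≤ ∑ i, tref a x.1 i := Finset.sum_nonneg fun i _ => hu.1 i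
  have hd : (0:ℝ) < 1 + ∑ i, tref a x.1 i := by linarith
  refine ⟨1 + ∑ i, tref a x.1 i, hd, ?_⟩
  have hjoin : (1 + ∑ i, tref a x.1 i) • fwd a b x =
      join (tref a x.1) (tref b x.2) := by
    rw [fwd, smul_smul, mul_inv_cancel₀ hd.ne', one_smul]
  have hb1 := congrArg l hjoin
  rw [map_smul] at hb1
  simp only [smul_eq_mul] at hb1
  rw [join_tref_eq h a b x, map_add] at hb1
  -- hb1 : (1 + ∑ tref a x.1) * l (fwd x) = l (hmap x) + l (join a b)
  have hDid : 1 + ∑ r, tref a x.1 r = fcut h (hmap h a b x) + (1 + ∑ j, a j) := by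
    have hfh : fcut h (hmap h a b x) =
        ∑ i, (x.1 i - a i * (∑ j, x.1 j + ∑ j, a j * x.1 j)) := by
      rw [hmap_apply, fcut_join]
    rw [hfh, sum_tref]
    rw [Finset.sum_sub_distrib]
    rw [← Finset.sum_mul]
    ring
  have hk : LinearMap.toContinuousLinearMap
      (((l : (Fin n → ℝ) →ₗ[ℝ] ℝ).comp (hmap h a b)) - M • ((fcut h).comp (hmap h a b))) x
      = l (hmap h a b x) - M * fcut h (hmap h a b x) := by
    simp [LinearMap.coe_toContinuousLinearMap', LinearMap.sub_apply, LinearMap.smul_apply,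
      LinearMap.comp_apply, smul_eq_mul]
  rw [hk]
  linear_combination -hb1 + M * hDid

/-! ### Exposed faces are preserved -/

lemma isExposed_image
    {E E' : Type*} [AddCommGroup E] [Module ℝ E] [TopologicalSpace E]
    [AddCommGroup E'] [Module ℝ E'] [TopologicalSpace E']
    {P : Set E} {Q : Set E'} {Φ : E → E'} {Ψ : E' → E}
    (hPQ : ∀ x ∈ P, Φ x ∈ Q) (hQP : ∀ z ∈ Q, Ψ z ∈ P)
    (hΨΦ : ∀ x ∈ P, Ψ (Φ x) = x) (hΦΨ : ∀ z ∈ Q, Φ (Ψ z) = z)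
    (transfer : ∀ (l : E →L[ℝ] ℝ) (M : ℝ), ∃ (k : E' →L[ℝ] ℝ) (d : ℝ),
      ∀ z ∈ Q, ∃ t : ℝ, 0 < t ∧ k z + d - M = t * (l (Ψ z) - M))
    {F : Set E} (hF : IsExposed ℝ P F) : IsExposed ℝ Q (Φ '' F) := by
  rintro ⟨z₀, x₀, hx₀F, rfl⟩
  obtain ⟨l, hl⟩ := hF ⟨x₀, hx₀F⟩
  have hx₀ : x₀ ∈ P ∧ ∀ y ∈ P, l y ≤ l x₀ := by rw [hl] at hx₀F; exact hx₀F
  obtain ⟨k, d, hk⟩ := transfer l (l x₀)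
  refine ⟨k, ?_⟩
  ext z
  constructor
  · rintro ⟨x, hxF, rfl⟩
    have hx : x ∈ P ∧ ∀ y ∈ P, l y ≤ l x := by rw [hl] at hxF; exact hxF
    refine ⟨hPQ x hx.1, fun w hw => ?_⟩
    obtain ⟨t, ht, hEq⟩ := hk w hw
    obtain ⟨t', ht', hEq'⟩ := hk (Φ x) (hPQ x hx.1)
    have h1 : l (Ψ w) ≤ l x₀ := hx₀.2 _ (hQP w hw)
    have h2 : l x₀ ≤ l (Ψ (Φ x)) := by rw [hΨΦ x hx.1]; exact hx.2 x₀ hx₀.1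
    nlinarith
  · rintro ⟨hzQ, hmax⟩
    obtain ⟨t, ht, hEq⟩ := hk z hzQ
    obtain ⟨t', ht', hEq'⟩ := hk (Φ x₀) (hPQ x₀ hx₀.1)
    have h2 : l (Ψ (Φ x₀)) = l x₀ := by rw [hΨΦ x₀ hx₀.1]
    have h3 : k (Φ x₀) ≤ k z := hmax _ (hPQ x₀ hx₀.1)
    have h4 : l x₀ ≤ l (Ψ z) := by nlinarith
    have hΨzF : Ψ z ∈ F := by
      rw [hl]
      exact ⟨hQP z hzQ, fun y hy => le_trans (hx₀.2 y hy) h4⟩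
    exact ⟨Ψ z, hΨzF, hΦΨ z hzQ⟩

/-! ### The order isomorphism of face posets -/

noncomputable def faceIso
    {E E' : Type*} [AddCommGroup E] [Module ℝ E] [TopologicalSpace E]
    [AddCommGroup E'] [Module ℝ E'] [TopologicalSpace E']
    {P : Set E} {Q : Set E'} {Φ : E → E'} {Ψ : E' → E}
    (hPQ : ∀ x ∈ P, Φ x ∈ Q) (hQP : ∀ z ∈ Q, Ψ z ∈ P)
    (hΨΦ : ∀ x ∈ P, Ψ (Φ x) = x) (hΦΨ : ∀ z ∈ Q, Φ (Ψ z) = z)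
    (tA : ∀ (l : E →L[ℝ] ℝ) (M : ℝ), ∃ (k : E' →L[ℝ] ℝ) (d : ℝ),
      ∀ z ∈ Q, ∃ t : ℝ, 0 < t ∧ k z + d - M = t * (l (Ψ z) - M))
    (tB : ∀ (l : E' →L[ℝ] ℝ) (M : ℝ), ∃ (k : E →L[ℝ] ℝ) (d : ℝ),
      ∀ x ∈ P, ∃ t : ℝ, 0 < t ∧ k x + d - M = t * (l (Φ x) - M)) :
    facePoset P ≃o facePoset Q where
  toFun F := ⟨Φ '' F.1, isExposed_image hPQ hQP hΨΦ hΦΨ tA F.2⟩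
  invFun F := ⟨Ψ '' F.1, isExposed_image hQP hPQ hΦΨ hΨΦ tB F.2⟩
  left_inv F := Subtype.ext (by
    show Ψ '' (Φ '' F.1) = F.1
    rw [Set.image_image]
    have heq : Set.EqOn (fun x => Ψ (Φ x)) id F.1 :=
      fun x hx => hΨΦ x (F.2.subset hx)
    rw [Set.image_congr heq, Set.image_id])
  right_inv F := Subtype.ext (by
    show Φ '' (Ψ '' F.1) = F.1
    rw [Set.image_image]
    have heq : Set.EqOn (fun z => Φ (Ψ z)) id F.1 :=
      fun z hz => hΦΨ z (F.2.subset hz)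
    rw [Set.image_congr heq, Set.image_id])
  map_rel_iff' := @fun F F' => by
    show Φ '' F.1 ⊆ Φ '' F'.1 ↔ F.1 ⊆ F'.1
    constructor
    · intro hsub x hx
      obtain ⟨x', hx', heqx⟩ := hsub ⟨x, hx, rfl⟩
      have hcg := congrArg Ψ heqx
      rw [hΨΦ x' (F'.2.subset hx'), hΨΦ x (F.2.subset hx)] at hcg
      exact hcg ▸ hx'
    · intro hsub
      exact Set.image_mono hsub

/-! ### Vertex computations -/

lemma fcut_le (h : m ≤ n) {z : Fin n → ℝ} (hz : z ∈ stdSimplexSet n) : fcut h z ≤ 1 := by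
  have hsplit := sum_split h z
  have h2 : 0 ≤ ∑ j : Fin (n - m), z (inj2 j) := Finset.sum_nonneg fun j _ => hz.1 _
  rw [fcut_apply]
  linarith [hz.2]

lemma fcut_single (h : m ≤ n) (r : Fin n) :
    fcut h (Pi.single r 1) = if (r : ℕ) < m then 1 else 0 := by
  rw [fcut_apply]
  split
  · next hr =>
    have hstep : ∀ i : Fin m, (Pi.single r 1 : Fin n → ℝ) (inj1 h i) =
        if i = ⟨(r : ℕ), hr⟩ then 1 else 0 := by
      intro i
      rw [Pi.single_apply]
      exact if_congr (by simp [Fin.ext_iff, inj1]) rfl rfl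
    rw [Finset.sum_congr rfl fun i _ => hstep i]
    simp
  · next hr =>
    apply Finset.sum_eq_zero
    intro i _
    have hne : inj1 h i ≠ r := by
      intro he
      apply hr
      rw [← he]
      exact i.2
    simp [Pi.single_apply, hne]

lemma single_mem_std (r : Fin p) : (Pi.single r 1 : Fin p → ℝ) ∈ stdSimplexSet p := by
  constructor
  · intro j
    rw [Pi.single_apply]
    split <;> norm_num
  · rw [sum_single]

lemma zero_mem_std : (0 : Fin p → ℝ) ∈ stdSimplexSet p := ⟨fun r => le_refl 0, by simp⟩

lemma fwd_self {a : Fin m → ℝ} {b : Fin (n - m) → ℝ} (ha : IsVert a) (hb : IsVert b) :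
    fwd a b (a, b) = 0 := by
  show (1 + ∑ i, tref a (a, b).1 i)⁻¹ • join (tref a (a, b).1) (tref b (a, b).2) = 0
  have h1 : tref a (a, b).1 = 0 := tref_self ha
  have h2 : tref b (a, b).2 = 0 := tref_self hb
  rw [h1, h2]
  have hj : join (0 : Fin m → ℝ) (0 : Fin (n - m) → ℝ) = 0 := by
    funext r
    unfold join
    split <;> rfl
  rw [hj, smul_zero]

end SPTS

/-- For `0 < m < n`, the product `Δᵐ × Δ^{n−m}` of standard simplices is
combinatorially equivalent to a face truncation `Π_G(Δⁿ)` of the standard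
`n`-simplex at a suitable proper face `G` (cut off by a halfspace `f ≤ c` whose
bounding hyperplane strictly separates the vertices of `G` from the other
vertices); moreover, given any vertex `v` of `Δᵐ × Δ^{n−m}`, the equivalence can
be chosen to carry the face `{v}` to a vertex `v′` of `Δⁿ` not contained in `G`. -/
theorem simplex_product_is_truncated_simplex
    (m n : ℕ) (h0 : 0 < m) (hmn : m < n)
    (v : (Fin m → ℝ) × (Fin (n - m) → ℝ))
    (hv : v ∈ Set.extremePoints ℝ (stdSimplexSet m ×ˢ stdSimplexSet (n - m))) :
    ∃ (G : Set (Fin n → ℝ)) (f : (Fin n → ℝ) →ₗ[ℝ] ℝ) (c : ℝ) (v' : Fin n → ℝ),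
      IsExposed ℝ (stdSimplexSet n) G ∧ G.Nonempty ∧ G ≠ stdSimplexSet n ∧
      (∀ x ∈ Set.extremePoints ℝ (stdSimplexSet n),
        (x ∈ G → c < f x) ∧ (x ∉ G → f x < c)) ∧
      v' ∈ Set.extremePoints ℝ (stdSimplexSet n) ∧ v' ∉ G ∧
      ∃ e : facePoset (stdSimplexSet m ×ˢ stdSimplexSet (n - m)) ≃o
              facePoset (stdSimplexSet n ∩ {x | f x ≤ c}),
        ∀ hv' : IsExposed ℝ (stdSimplexSet m ×ˢ stdSimplexSet (n - m)) {v},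
          (e ⟨{v}, hv'⟩ : facePoset (stdSimplexSet n ∩ {x | f x ≤ c})).1 = {v'} := by
  classical
  open SPTS in
  have hle : m ≤ n := hmn.le
  -- the vertex v is a pair of vertices of the factors
  rw [extremePoints_prod] at hv
  have ha : IsVert v.1 := by
    rcases Set.mem_insert_iff.mp (extreme_subset m hv.1) with h | h
    · exact Or.inl h
    · obtain ⟨i, hi⟩ := h
      exact Or.inr ⟨i, hi.symm⟩
  have hb : IsVert v.2 := by
    rcases Set.mem_insert_iff.mp (extreme_subset (n - m) hv.2) with h | h
    · exact Or.inl h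
    · obtain ⟨i, hi⟩ := h
      exact Or.inr ⟨i, hi.symm⟩
  -- the cut functional and the face G
  set fL : (Fin n → ℝ) →ₗ[ℝ] ℝ := fcut hle with hfL
  set fC : (Fin n → ℝ) →L[ℝ] ℝ := LinearMap.toContinuousLinearMap fL with hfC
  have hcoe : ∀ z, fC z = fL z := fun z => by
    rw [hfC, LinearMap.coe_toContinuousLinearMap']
  set G : Set (Fin n → ℝ) :=
    {x ∈ stdSimplexSet n | ∀ y ∈ stdSimplexSet n, fC y ≤ fC x} with hG
  have hGexp : IsExposed ℝ (stdSimplexSet n) G := fun _ => ⟨fC, rfl⟩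
  -- the vertex e₀ of G
  set r0 : Fin n := ⟨0, by omega⟩ with hr0
  set e₀ : Fin n → ℝ := Pi.single r0 1 with he₀
  have he₀S : e₀ ∈ stdSimplexSet n := single_mem_std r0
  have hfce₀ : fL e₀ = 1 := by
    rw [he₀, hfL, fcut_single hle]
    simp [hr0, h0]
  have hGe₀ : e₀ ∈ G := by
    refine ⟨he₀S, fun w hw => ?_⟩
    rw [hcoe, hcoe, hfce₀]
    exact fcut_le hle hw
  have hG1 : ∀ x ∈ G, 1 ≤ fL x := by
    intro x hx
    have := hx.2 e₀ he₀S
    rw [hcoe, hcoe, hfce₀] at this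
    exact this
  have hzero_not : (0 : Fin n → ℝ) ∉ G := by
    intro h
    have := hG1 0 h
    rw [map_zero] at this
    linarith
  have hGne : G ≠ stdSimplexSet n := by
    intro he
    exact hzero_not (he ▸ zero_mem_std)
  -- separation of vertices
  have hsep : ∀ x ∈ Set.extremePoints ℝ (stdSimplexSet n),
      (x ∈ G → (1/2 : ℝ) < fL x) ∧ (x ∉ G → fL x < 1/2) := by
    intro x hx
    constructor
    · intro hxG
      have := hG1 x hxG
      linarith
    · intro hxnG
      rcases Set.mem_insert_iff.mp (extreme_subset n hx) with rfl | ⟨r, hr⟩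
      · rw [map_zero]; norm_num
      · subst hr
        by_cases hrm : ((r : ℕ) < m)
        · exfalso
          apply hxnG
          refine ⟨single_mem_std r, fun w hw => ?_⟩
          rw [hcoe, hcoe]
          have h1 : fL (Pi.single r 1) = 1 := by
            rw [hfL, fcut_single hle]; simp [hrm]
          rw [h1]
          exact fcut_le hle hw
        · rw [hfL, fcut_single hle]
          simp only [hrm, if_false]
          norm_num
  -- the polytope maps
  have hPQ : ∀ x ∈ stdSimplexSet m ×ˢ stdSimplexSet (n - m),
      fwd v.1 v.2 x ∈ stdSimplexSet n ∩ {z | fL z ≤ 1/2} :=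
    fun x hx => fwd_mem ha hb hx hle
  have hQP : ∀ z ∈ stdSimplexSet n ∩ {z | fL z ≤ 1/2},
      bwd hle v.1 v.2 z ∈ stdSimplexSet m ×ˢ stdSimplexSet (n - m) :=
    fun z hz => bwd_mem ha hb hle hz
  have hBF : ∀ x ∈ stdSimplexSet m ×ˢ stdSimplexSet (n - m),
      bwd hle v.1 v.2 (fwd v.1 v.2 x) = x :=
    fun x hx => bwd_fwd ha hb hx hle
  have hFB : ∀ z ∈ stdSimplexSet n ∩ {z | fL z ≤ 1/2},
      fwd v.1 v.2 (bwd hle v.1 v.2 z) = z :=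
    fun z hz => fwd_bwd ha hb hle hz
  refine ⟨G, fL, 1/2, 0, hGexp, ⟨e₀, hGe₀⟩, hGne, hsep, zero_extreme n, hzero_not,
    faceIso hPQ hQP hBF hFB (transferA hle v.1 v.2) (transferB hle ha), fun hv' => ?_⟩
  show fwd v.1 v.2 '' {v} = {0}
  rw [Set.image_singleton]
  congr 1
  calc fwd v.1 v.2 v = fwd v.1 v.2 (v.1, v.2) := by rw [Prod.mk.eta]
    _ = 0 := fwd_self ha hb
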